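/- Let 𝓕 be a nonprincipal ultrafilter on ℕ, (V n) a family of nonempty finite sets with |V n| → ∞ along 𝓕, k ≥ 2, and r n ⊆ (V n)^k symmetric relations. Let B n ⊆ V n be nonempty finite subsets with δ(B) = α, and suppose that for every tuple of pairwise distinct germs a¹,…,a^{k−1} belonging to ∏ B n / 𝓕, the family C n = {b ∈ B n : (a¹ n, …, a^{k−1} n, b) ∉ r n} satisfies δ(C) ≤ 0 (or is 𝓕-a.e. empty). For each n let A n ⊆ B n be maximal under inclusion among subsets of B n all of whose k-tuples of pairwise distinct elements belong to r n, and suppose each A n is nonempty. Then δ(A) ≥ α / (k−1). -/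

import Mathlib

open Filter

/-- The family `A` of nonempty finite subsets `A n ⊆ V n` has dimension `l` along the
ultrafilter `𝓕`: the sequence `log |A n| / log |V n|` converges to `l` along `𝓕`. -/
def hasDim (𝓕 : Ultrafilter ℕ) {V : ℕ → Type} [∀ n, Fintype (V n)]
    (A : ∀ n, Set (V n)) (l : ℝ) : Prop :=
  Tendsto (fun n => Real.log ((A n).ncard) / Real.log (Fintype.card (V n)))
    (𝓕 : Filter ℕ) (nhds l)

/-- Given a `(k-1)`-tuple `a` and `b : V`, form the `k`-tuple `(a₁, …, a_{k-1}, b)`. -/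
def appendLast {V : Type*} {k : ℕ} (a : Fin (k - 1) → V) (b : V) : Fin k → V :=
  fun t => if h : (t : ℕ) < k - 1 then a ⟨(t : ℕ), h⟩ else b


lemma appendLast_eq {V : Type*} {k : ℕ} (hk : 1 ≤ k) (y : Fin k → V) {b : V}
    (hy : y ⟨k - 1, Nat.sub_lt hk one_pos⟩ = b) :
    appendLast (fun i : Fin (k - 1) => y ⟨i.val, lt_of_lt_of_le i.isLt (Nat.sub_le k 1)⟩) b = y := by
  funext s
  unfold appendLast
  by_cases h : s.val < k - 1
  · simp only [dif_pos h]
  · simp only [dif_neg h]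
    have hs : s = (⟨k - 1, Nat.sub_lt hk one_pos⟩ : Fin k) := by
      have h1 := s.isLt
      have h2 : ¬ (s.val < k - 1) := h
      exact Fin.ext (show s.val = k - 1 by omega)
    rw [hs]; exact hy.symm

lemma extract {V : Type*} {k : ℕ} (hk : 2 ≤ k) (A : Set V) (b : V) (hb : b ∉ A)
    (x : Fin k → V) (hinj : Function.Injective x) (hx : ∀ i, x i ∈ insert b A)
    (i₀ : Fin k) (hi₀ : x i₀ = b) :
    ∃ (t : Fin (k - 1) → V) (σ : Equiv.Perm (Fin k)),
      Function.Injective t ∧ (∀ i, t i ∈ A) ∧ appendLast t b = x ∘ σ := by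
  have hk1 : 1 ≤ k := by omega
  set lastIdx : Fin k := ⟨k - 1, Nat.sub_lt hk1 one_pos⟩ with hlast
  set σ := Equiv.swap i₀ lastIdx with hσ
  set y := x ∘ σ with hydef
  have hyinj : Function.Injective y := hinj.comp σ.injective
  have hylast : y lastIdx = b := by
    simp only [hydef, Function.comp, hσ, Equiv.swap_apply_right, hi₀]
  refine ⟨fun i => y ⟨i.val, lt_of_lt_of_le i.isLt (Nat.sub_le k 1)⟩, σ, ?_, ?_,
    appendLast_eq hk1 y hylast⟩
  · intro i j hij
    have h2 := hyinj hij
    simp only [Fin.mk.injEq] at h2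
    exact Fin.ext h2
  · intro i
    rcases hx (σ ⟨i.val, lt_of_lt_of_le i.isLt (Nat.sub_le k 1)⟩) with h | h
    · exfalso
      have : y ⟨i.val, lt_of_lt_of_le i.isLt (Nat.sub_le k 1)⟩ = y lastIdx := by
        rw [hylast]; exact h
      have h3 := hyinj this
      have : i.val = k - 1 := congrArg Fin.val h3
      omega
    · exact h

lemma aux_biUnion {α ι : Type*} [Finite α] (T : Finset ι) (C : ι → Set α) (M : ℕ)
    (h : ∀ i ∈ T, (C i).ncard ≤ M) : (⋃ i ∈ T, C i).ncard ≤ T.card * M := by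
  classical
  revert h
  refine Finset.induction_on T ?_ ?_
  · intro _; simp
  · intro a s ha ih h
    rw [Finset.set_biUnion_insert]
    calc (C a ∪ ⋃ i ∈ s, C i).ncard ≤ (C a).ncard + (⋃ i ∈ s, C i).ncard :=
          Set.ncard_union_le _ _
      _ ≤ M + s.card * M := add_le_add (h a (Finset.mem_insert_self a s))
          (ih (fun i hi => h i (Finset.mem_insert_of_mem hi)))
      _ = (insert a s).card * M := by rw [Finset.card_insert_of_notMem ha]; ring

lemma key {V : Type*} [Fintype V] {k : ℕ} (hk : 2 ≤ k)
    (r : Set (Fin k → V))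
    (hsym : ∀ (σ : Equiv.Perm (Fin k)) (x : Fin k → V), x ∈ r → x ∘ σ ∈ r)
    (B A : Set V) (hAB : A ⊆ B)
    (hAhom : ∀ x : Fin k → V, (∀ i, x i ∈ A) → Function.Injective x → x ∈ r)
    (hAmax : ∀ A' : Set V, A ⊆ A' → A' ⊆ B →
      (∀ x : Fin k → V, (∀ i, x i ∈ A') → Function.Injective x → x ∈ r) → A' = A)
    (hex : ∃ t : Fin (k - 1) → V, Function.Injective t ∧ ∀ i, t i ∈ A) :
    ∃ t : Fin (k - 1) → V, Function.Injective t ∧ (∀ i, t i ∈ A) ∧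
      B.ncard ≤ A.ncard ^ (k - 1) * ({b ∈ B | appendLast t b ∉ r}.ncard + 1) := by
  classical
  set T : Set (Fin (k - 1) → V) := {t | Function.Injective t ∧ ∀ i, t i ∈ A} with hT
  have hTfin : T.Finite := Set.toFinite T
  have hTne : T.Nonempty := hex
  obtain ⟨t₀, ht₀T, ht₀max⟩ := Set.Finite.exists_maximalFor
      (fun t => {b ∈ B | appendLast t b ∉ r}.ncard) T hTfin hTne
  set M := {b ∈ B | appendLast t₀ b ∉ r}.ncard with hM
  have hmax : ∀ t ∈ T, {b ∈ B | appendLast t b ∉ r}.ncard ≤ M := by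
    intro t ht
    rcases le_total ({b ∈ B | appendLast t b ∉ r}.ncard) M with h | h
    · exact h
    · exact ht₀max ht h
  set Tf : Finset (Fin (k - 1) → V) := hTfin.toFinset with hTf
  have hcover : B ⊆ A ∪ ⋃ t ∈ Tf, {b ∈ B | appendLast t b ∉ r} := by
    intro b hb
    by_cases hbA : b ∈ A
    · exact Or.inl hbA
    right
    have hnh : ¬ ∀ x : Fin k → V, (∀ i, x i ∈ insert b A) → Function.Injective x → x ∈ r := by
      intro hhom
      have heq := hAmax (insert b A) (Set.subset_insert b A) (Set.insert_subset hb hAB) hhom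
      exact hbA (heq ▸ Set.mem_insert b A)
    push_neg at hnh
    obtain ⟨x, hxmem, hxinj, hxr⟩ := hnh
    have hex0 : ∃ i₀, x i₀ = b := by
      by_contra hno
      push_neg at hno
      exact hxr (hAhom x
        (fun i => (Set.mem_insert_iff.mp (hxmem i)).resolve_left (hno i)) hxinj)
    obtain ⟨i₀, hi₀⟩ := hex0
    obtain ⟨t, σ, htinj, htA, hteq⟩ := extract hk A b hbA x hxinj hxmem i₀ hi₀
    have htr : appendLast t b ∉ r := by
      intro hin
      apply hxr
      rw [hteq] at hin
      have h2 := hsym σ.symm _ hin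
      have h3 : (x ∘ σ) ∘ σ.symm = x := by
        funext s; simp
      rwa [h3] at h2
    exact Set.mem_biUnion (hTfin.mem_toFinset.mpr ⟨htinj, htA⟩) ⟨hb, htr⟩
  refine ⟨t₀, ht₀T.1, ht₀T.2, ?_⟩
  have hcard1 : Tf.card ≤ A.ncard ^ (k - 1) := by
    have h1 : Tf.card ≤ (Fintype.piFinset (fun _ : Fin (k - 1) => (Set.toFinite A).toFinset)).card := by
      apply Finset.card_le_card
      intro t ht
      rw [Fintype.mem_piFinset]
      intro i
      exact (Set.toFinite A).mem_toFinset.mpr ((hTfin.mem_toFinset.mp ht).2 i)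
    rwa [Fintype.card_piFinset, Finset.prod_const, Finset.card_univ, Fintype.card_fin,
      ← Set.ncard_eq_toFinset_card A] at h1
  calc B.ncard ≤ (A ∪ ⋃ t ∈ Tf, {b ∈ B | appendLast t b ∉ r}).ncard :=
        Set.ncard_le_ncard hcover (Set.toFinite _)
    _ ≤ A.ncard + (⋃ t ∈ Tf, {b ∈ B | appendLast t b ∉ r}).ncard := Set.ncard_union_le _ _
    _ ≤ A.ncard + Tf.card * M := by
        refine Nat.add_le_add_left (aux_biUnion Tf (fun t => {b ∈ B | appendLast t b ∉ r}) M ?_) _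
        intro t ht
        exact hmax t (hTfin.mem_toFinset.mp ht)
    _ ≤ A.ncard ^ (k - 1) + A.ncard ^ (k - 1) * M := by
        refine add_le_add (Nat.le_self_pow (by omega) _) (Nat.mul_le_mul_right M hcard1)
    _ = A.ncard ^ (k - 1) * (M + 1) := by ring

lemma dichotomy {V : Type*} {k : ℕ} (hk : 2 ≤ k) (r : Set (Fin k → V))
    (B A : Set V) (hAB : A ⊆ B)
    (hAmax : ∀ A' : Set V, A ⊆ A' → A' ⊆ B →
      (∀ x : Fin k → V, (∀ i, x i ∈ A') → Function.Injective x → x ∈ r) → A' = A)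
    (hno : ¬ ∃ t : Fin (k - 1) → V, Function.Injective t ∧ ∀ i, t i ∈ A) :
    A = B := by
  refine Set.Subset.antisymm hAB ?_
  intro b hb
  by_contra hbA
  have hhom : ∀ x : Fin k → V, (∀ i, x i ∈ insert b A) → Function.Injective x → x ∈ r := by
    intro x hx hinj
    exfalso
    by_cases hex : ∃ i₀, x i₀ = b
    · obtain ⟨i₀, hi₀⟩ := hex
      obtain ⟨t, σ, htinj, htA, -⟩ := extract hk A b hbA x hinj hx i₀ hi₀
      exact hno ⟨t, htinj, htA⟩
    · push_neg at hex
      refine hno ⟨fun i => x ⟨i.val, lt_of_lt_of_le i.isLt (Nat.sub_le k 1)⟩, ?_, ?_⟩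
      · intro i j hij
        have h2 := hinj hij
        simp only [Fin.mk.injEq] at h2
        exact Fin.ext h2
      · intro i
        exact (Set.mem_insert_iff.mp (hx _)).resolve_left (hex _)
  have heq := hAmax (insert b A) (Set.subset_insert b A) (Set.insert_subset hb hAB) hhom
  exact hbA (heq ▸ Set.mem_insert b A)

theorem hasDim_maximal_homogeneous
    (𝓕 : Ultrafilter ℕ) (h𝓕 : ∀ s : Set ℕ, s.Finite → s ∉ 𝓕)
    (V : ℕ → Type) [∀ n, Fintype (V n)] [∀ n, Nonempty (V n)]
    (hV : Tendsto (fun n => Fintype.card (V n)) (𝓕 : Filter ℕ) atTop)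
    (k : ℕ) (hk : 2 ≤ k)
    (r : ∀ n, Set (Fin k → V n))
    (hsym : ∀ n (σ : Equiv.Perm (Fin k)) (x : Fin k → V n), x ∈ r n → x ∘ σ ∈ r n)
    (B : ∀ n, Set (V n)) (hBne : ∀ n, (B n).Nonempty)
    (α : ℝ) (hdB : hasDim 𝓕 B α)
    (hsmall : ∀ a : Fin (k - 1) → ∀ n, V n,
        (∀ i, {n | a i n ∈ B n} ∈ 𝓕) →
        (∀ i j, i ≠ j → {n | a i n ≠ a j n} ∈ 𝓕) →
        ((∃ l : ℝ, hasDim 𝓕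
            (fun n => {b ∈ B n | appendLast (fun i => a i n) b ∉ r n}) l ∧ l ≤ 0) ∨
          {n | {b ∈ B n | appendLast (fun i => a i n) b ∉ r n} = ∅} ∈ 𝓕))
    (A : ∀ n, Set (V n)) (hAB : ∀ n, A n ⊆ B n) (hAne : ∀ n, (A n).Nonempty)
    (hAhom : ∀ n (x : Fin k → V n), (∀ i, x i ∈ A n) → Function.Injective x → x ∈ r n)
    (hAmax : ∀ n (A' : Set (V n)), A n ⊆ A' → A' ⊆ B n →
      (∀ x : Fin k → V n, (∀ i, x i ∈ A') → Function.Injective x → x ∈ r n) →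
      A' = A n) :
    ∃ l : ℝ, hasDim 𝓕 A l ∧ α / ((k : ℝ) - 1) ≤ l := by
  classical
  set LV : ℕ → ℝ := fun n => Real.log (Fintype.card (V n)) with hLVdef
  set f : ℕ → ℝ := fun n => Real.log (((A n).ncard : ℕ) : ℝ) / LV n with hfdef
  set g : ℕ → ℝ := fun n => Real.log (((B n).ncard : ℕ) : ℝ) / LV n with hgdef
  have hkR : (1 : ℝ) ≤ (k : ℝ) - 1 := by
    have : (2 : ℝ) ≤ (k : ℝ) := by exact_mod_cast hk
    linarith
  have hgt : Tendsto g (𝓕 : Filter ℕ) (nhds α) := hdB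
  have hlogV : ∀ᶠ n in (𝓕 : Filter ℕ), 0 < LV n := by
    filter_upwards [hV.eventually_ge_atTop 2] with n hn
    exact Real.log_pos (by exact_mod_cast hn)
  have hAnc : ∀ n, (1 : ℝ) ≤ (((A n).ncard : ℕ) : ℝ) := fun n => by
    exact_mod_cast (Set.ncard_pos (Set.toFinite _)).mpr (hAne n)
  have hBnc : ∀ n, (1 : ℝ) ≤ (((B n).ncard : ℕ) : ℝ) := fun n => by
    exact_mod_cast (Set.ncard_pos (Set.toFinite _)).mpr (hBne n)
  -- f is eventually in [0,1]
  have hf01 : ∀ᶠ n in (𝓕 : Filter ℕ), f n ∈ Set.Icc (0 : ℝ) 1 := by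
    filter_upwards [hlogV] with n hn
    constructor
    · exact div_nonneg (Real.log_nonneg (hAnc n)) hn.le
    · rw [div_le_one hn]
      apply Real.log_le_log (by linarith [hAnc n])
      have h1 : (A n).ncard ≤ Fintype.card (V n) := by
        have := Set.ncard_le_ncard (Set.subset_univ (A n)) (Set.toFinite _)
        rwa [Set.ncard_univ, Nat.card_eq_fintype_card] at this
      exact_mod_cast h1
  -- ultrafilter limit of f
  set f' : ℕ → ℝ := fun n => max 0 (min 1 (f n)) with hf'def
  have hf'mem : ∀ n, f' n ∈ Set.Icc (0 : ℝ) 1 :=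
    fun n => ⟨le_max_left _ _, max_le zero_le_one (min_le_left _ _)⟩
  obtain ⟨l, -, hl⟩ := (isCompact_Icc (a := (0 : ℝ)) (b := 1)).ultrafilter_le_nhds
    (𝓕.map f') (by
      rw [Ultrafilter.coe_map]
      exact Filter.le_principal_iff.mpr (Filter.mem_map.mpr
        (Filter.univ_mem' (fun n => hf'mem n))))
  rw [Ultrafilter.coe_map] at hl
  have hf't : Tendsto f' (𝓕 : Filter ℕ) (nhds l) := hl
  have hft : Tendsto f (𝓕 : Filter ℕ) (nhds l) := by
    refine hf't.congr' ?_
    filter_upwards [hf01] with n hn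
    simp only [hf'def]
    rw [min_eq_right hn.2, max_eq_right hn.1]
  refine ⟨l, hft, ?_⟩
  have hα0 : 0 ≤ α := by
    refine ge_of_tendsto hgt ?_
    filter_upwards [hlogV] with n hn
    exact div_nonneg (Real.log_nonneg (hBnc n)) hn.le
  have hdich : ∀ n, A n = B n ∨
      ∃ t : Fin (k - 1) → V n, Function.Injective t ∧ ∀ i, t i ∈ A n := by
    intro n
    by_cases h : ∃ t : Fin (k - 1) → V n, Function.Injective t ∧ ∀ i, t i ∈ A n
    · exact Or.inr h
    · exact Or.inl (dichotomy hk (r n) (B n) (A n) (hAB n) (hAmax n) h)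
  by_cases hcase : {n | A n = B n} ∈ 𝓕
  · -- A = B a.e., so l = α
    have hfg : f =ᶠ[(𝓕 : Filter ℕ)] g := by
      filter_upwards [hcase] with n hn
      simp only [hfdef, hgdef, Set.mem_setOf_eq] at hn ⊢
      rw [hn]
    have : Tendsto f (𝓕 : Filter ℕ) (nhds α) := hgt.congr' hfg.symm
    have hlα : l = α := tendsto_nhds_unique hft this
    rw [hlα]
    exact div_le_self hα0 hkR
  · -- main case
    set S : Set ℕ := {n | ∃ t : Fin (k - 1) → V n, Function.Injective t ∧ ∀ i, t i ∈ A n}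
      with hSdef
    have hS : S ∈ 𝓕 := by
      refine Filter.mem_of_superset (Ultrafilter.compl_mem_iff_notMem.mpr hcase) ?_
      intro n hn
      exact (hdich n).resolve_left hn
    have hP : ∀ n ∈ S, ∃ t : Fin (k - 1) → V n, Function.Injective t ∧ (∀ i, t i ∈ A n) ∧
        (B n).ncard ≤ (A n).ncard ^ (k - 1) *
          ({b ∈ B n | appendLast t b ∉ r n}.ncard + 1) :=
      fun n hn => key hk (r n) (hsym n) (B n) (A n) (hAB n) (hAhom n) (hAmax n) hn
    set tt : ∀ n, Fin (k - 1) → V n := fun n =>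
      if h : n ∈ S then (hP n h).choose else fun _ => Classical.arbitrary (V n) with htt
    have httS : ∀ n ∈ S, Function.Injective (tt n) ∧ (∀ i, tt n i ∈ A n) ∧
        (B n).ncard ≤ (A n).ncard ^ (k - 1) *
          ({b ∈ B n | appendLast (tt n) b ∉ r n}.ncard + 1) := by
      intro n hn
      simp only [htt, dif_pos hn]
      exact (hP n hn).choose_spec
    set a : Fin (k - 1) → ∀ n, V n := fun i n => tt n i with ha
    have hmem : ∀ i, {n | a i n ∈ B n} ∈ 𝓕 := by
      intro i
      refine Filter.mem_of_superset hS (fun n hn => hAB n ((httS n hn).2.1 i))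
    have hdist : ∀ i j, i ≠ j → {n | a i n ≠ a j n} ∈ 𝓕 := by
      intro i j hij
      refine Filter.mem_of_superset hS (fun n hn he => hij ((httS n hn).1 he))
    set Cs : ∀ n, Set (V n) := fun n => {b ∈ B n | appendLast (fun i => a i n) b ∉ r n}
      with hCs
    set hfun : ℕ → ℝ := fun n => Real.log (((Cs n).ncard : ℕ) : ℝ) / LV n with hhdef
    obtain ⟨l', hCl, hl'0⟩ :
        ∃ l' : ℝ, Tendsto hfun (𝓕 : Filter ℕ) (nhds l') ∧ l' ≤ 0 := by
      rcases hsmall a hmem hdist with ⟨l', hC, hl'0⟩ | hemp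
      · exact ⟨l', hC, hl'0⟩
      · refine ⟨0, ?_, le_refl 0⟩
        refine tendsto_const_nhds.congr' ?_
        filter_upwards [hemp] with n hn
        simp only [hhdef]
        rw [show Cs n = ∅ from hn]
        simp
    have hLVtop : Tendsto LV (𝓕 : Filter ℕ) atTop :=
      Real.tendsto_log_atTop.comp (tendsto_natCast_atTop_atTop.comp hV)
    have hlog2 : Tendsto (fun n => Real.log 2 / LV n) (𝓕 : Filter ℕ) (nhds 0) :=
      tendsto_const_nhds.div_atTop hLVtop
    have hineq : ∀ᶠ n in (𝓕 : Filter ℕ),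
        g n ≤ ((k : ℝ) - 1) * f n + (hfun n + Real.log 2 / LV n) := by
      filter_upwards [hS, hlogV] with n hn hLV
      have hnat : (B n).ncard ≤ (A n).ncard ^ (k - 1) * ((Cs n).ncard + 1) :=
        (httS n hn).2.2
      set cA := (A n).ncard
      set cB := (B n).ncard
      set cC := (Cs n).ncard
      have hAp : (0 : ℝ) < (cA : ℝ) := by linarith [hAnc n]
      have hcast : ((cB : ℕ) : ℝ) ≤ ((cA : ℕ) : ℝ) ^ (k - 1) * (((cC : ℕ) : ℝ) + 1) := by
        exact_mod_cast hnat
      have h2 : Real.log ((cB : ℕ) : ℝ) ≤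
          Real.log (((cA : ℕ) : ℝ) ^ (k - 1) * (((cC : ℕ) : ℝ) + 1)) :=
        Real.log_le_log (by linarith [hBnc n]) hcast
      rw [Real.log_mul (by positivity) (by positivity), Real.log_pow] at h2
      have h3 : Real.log (((cC : ℕ) : ℝ) + 1) ≤ Real.log ((cC : ℕ) : ℝ) + Real.log 2 := by
        rcases Nat.eq_zero_or_pos cC with h0 | h0
        · simp only [h0, Nat.cast_zero, zero_add, Real.log_one, Real.log_zero]
          linarith [Real.log_nonneg (one_le_two (α := ℝ))]
        · have hC1 : (1 : ℝ) ≤ ((cC : ℕ) : ℝ) := by exact_mod_cast h0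
          calc Real.log (((cC : ℕ) : ℝ) + 1) ≤ Real.log (2 * ((cC : ℕ) : ℝ)) :=
                Real.log_le_log (by linarith) (by linarith)
            _ = Real.log 2 + Real.log ((cC : ℕ) : ℝ) :=
                Real.log_mul two_ne_zero (by linarith)
            _ = Real.log ((cC : ℕ) : ℝ) + Real.log 2 := add_comm _ _
      have hnum : Real.log ((cB : ℕ) : ℝ) ≤
          ((k : ℝ) - 1) * Real.log ((cA : ℕ) : ℝ) +
            (Real.log ((cC : ℕ) : ℝ) + Real.log 2) := by
        have hcst : ((k - 1 : ℕ) : ℝ) = (k : ℝ) - 1 := by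
          rw [Nat.cast_sub (by omega), Nat.cast_one]
        rw [hcst] at h2
        linarith
      have h4 := (div_le_div_iff_of_pos_right hLV).mpr hnum
      simp only [hgdef, hfdef, hhdef]
      calc Real.log ((cB : ℕ) : ℝ) / LV n ≤
            (((k : ℝ) - 1) * Real.log ((cA : ℕ) : ℝ) +
              (Real.log ((cC : ℕ) : ℝ) + Real.log 2)) / LV n := h4
        _ = ((k : ℝ) - 1) * (Real.log ((cA : ℕ) : ℝ) / LV n) +
            (Real.log ((cC : ℕ) : ℝ) / LV n + Real.log 2 / LV n) := by ring
    have hRHS : Tendsto (fun n => ((k : ℝ) - 1) * f n + (hfun n + Real.log 2 / LV n))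
        (𝓕 : Filter ℕ) (nhds (((k : ℝ) - 1) * l + (l' + 0))) :=
      (tendsto_const_nhds.mul hft).add (hCl.add hlog2)
    have hle : α ≤ ((k : ℝ) - 1) * l + (l' + 0) :=
      le_of_tendsto_of_tendsto hgt hRHS hineq
    have hkpos : (0 : ℝ) < (k : ℝ) - 1 := by linarith
    rw [div_le_iff₀ hkpos]
    linarith
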